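/- arXiv:0802.2903 — 2 statements merged into one kernel-verified Lean document; each statement's English description precedes it below -/
import Mathlib

section
/- Let F be a torsion free sheaf on a smooth projective threefold X fibered over a curve B, with fiber class 𝔣 and ample divisor H. Suppose F has good quotients, i.e. for every subsheaf F' ⊂ F with 0 < rk(F') < rk(F) one has μ_𝔣(F') < μ_𝔣(F), where μ_𝔣(G) = (c_1(G)·H·𝔣)/rk(G). Then there exists M_0 ≥ 0 such that F is μ-stable with respect to H + M𝔣 for all M ≥ M_0. -/
/-- A torsion free sheaf `F` on a fibered threefold with good
quotients (every proper-rank subsheaf has strictly smaller relative slope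
`μ_𝔣 = c₁·H·𝔣/rk`) is `μ`-stable with respect to `H + M𝔣` for all `M ≥ M₀`.
Subsheaves of `F` are abstracted as a type `Sub` with numerical invariants
`rk`, `dH = c₁·H²` and `df = c₁·H·𝔣`; the slope for the polarization `H + M𝔣`
is `(dH + 2M·df)/rk`, using `(H+M𝔣)² = H² + 2M H𝔣` and `𝔣² = 0`. -/
theorem stmt_3 (Sub : Type*) (rk : Sub → ℕ) (dH df : Sub → ℤ)
    (rkF : ℕ) (dHF dfF : ℤ) (hrkF : 0 < rkF)
    -- boundedness of slopes of subsheaves (maximal destabilizing subsheaf)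
    (hbound : ∃ Cb : ℚ, ∀ s : Sub, 0 < rk s → (dH s : ℚ) / rk s ≤ Cb)
    -- good quotients
    (hgood : ∀ s : Sub, 0 < rk s → rk s < rkF →
      (df s : ℚ) / rk s < (dfF : ℚ) / rkF) :
    ∃ M0 : ℚ, 0 ≤ M0 ∧ ∀ M : ℚ, M0 ≤ M → ∀ s : Sub, 0 < rk s → rk s < rkF →
      ((dH s : ℚ) + 2 * M * df s) / rk s < ((dHF : ℚ) + 2 * M * dfF) / rkF := by
  obtain ⟨Cb, hCb⟩ := hbound
  have hR : (0:ℚ) < rkF := by exact_mod_cast hrkF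
  refine ⟨max 0 ((Cb - dHF / rkF) * rkF ^ 2 / 2 + 1), le_max_left _ _, ?_⟩
  intro M hM s hs hlt
  have hr : (0:ℚ) < rk s := by exact_mod_cast hs
  have hle : (rk s : ℚ) ≤ rkF := by exact_mod_cast hlt.le
  have hM0 : (Cb - dHF / rkF) * rkF ^ 2 / 2 + 1 ≤ M := le_trans (le_max_right _ _) hM
  have hMnn : (0:ℚ) ≤ M := le_trans (le_max_left _ _) hM
  -- integer gap
  have hq := hgood s hs hlt
  rw [div_lt_div_iff₀ hr hR] at hq
  have hint : (df s) * rkF + 1 ≤ dfF * rk s := by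
    have : (df s : ℚ) * rkF < (dfF : ℚ) * rk s := hq
    exact_mod_cast Int.add_one_le_of_lt (by exact_mod_cast this)
  have hgap : (df s : ℚ) * rkF + 1 ≤ (dfF : ℚ) * rk s := by exact_mod_cast hint
  have hbnd : (dH s : ℚ) ≤ Cb * rk s := by
    have := hCb s hs
    rwa [div_le_iff₀ hr] at this
  rw [div_lt_div_iff₀ hr hR]
  have hdHF : dHF / (rkF:ℚ) * rkF = dHF := div_mul_cancel₀ _ hR.ne'
  nlinarith [mul_nonneg hMnn (sub_nonneg.mpr hgap),
    mul_nonneg (mul_nonneg hMnn hMnn) (sub_nonneg.mpr hgap),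
    mul_le_mul_of_nonneg_right hbnd hR.le,
    sq_nonneg ((rkF:ℚ) - rk s),
    mul_le_mul_of_nonneg_left hle hMnn,
    mul_pos hr hR]
end

section
/- Let S be a K3 surface, B a curve, X = S × B, and C ⊂ X a spectral curve flat of degree n over B, L a line bundle on C with χ(L) given, E = i_*L. Then the Chern character of F = Φ^N(E), computed from the exact triangle Rπ_{2*}π_1^*(E ⊗ O_X(E_div)) → Φ^N(E) → Φ^{I_Δ}(E) ⊗ O_X(E_div), equals (2n, nE_div + (2χ(L) + C·E_div)𝔣, −2nF_cl + χ(L)E_div·𝔣 − [C], −3χ(L) − C·E_div), where E_div = (l + 2h) × B, F_cl is the class of the section fiber {pt} × B, Td(X/B) = (1, 0, 2F_cl, 0), ch(E) = (0, 0, [C], χ(L)), and ch O_X(E_div) = (1, E_div, −2F_cl, 0). -/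
/-- Multiplication of (truncated) Chern characters on a threefold, written in
degrees `(H⁰, H², H⁴, H⁶) = (ℚ, A1, A2, ℚ)` with bilinear products
`m11 : H²×H² → H⁴` and `m12 : H²×H⁴ → H⁶ = ℚ`. -/
def chMul {A1 A2 : Type*} [AddCommGroup A1] [Module ℚ A1]
    [AddCommGroup A2] [Module ℚ A2]
    (m11 : A1 →ₗ[ℚ] A1 →ₗ[ℚ] A2) (m12 : A1 →ₗ[ℚ] A2 →ₗ[ℚ] ℚ)
    (a b : ℚ × A1 × A2 × ℚ) : ℚ × A1 × A2 × ℚ :=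
  (a.1 * b.1,
   a.1 • b.2.1 + b.1 • a.2.1,
   a.1 • b.2.2.1 + b.1 • a.2.2.1 + m11 a.2.1 b.2.1,
   a.1 * b.2.2.2 + b.1 * a.2.2.2 + m12 a.2.1 b.2.2.1 + m12 b.2.1 a.2.2.1)

/-- On `X = S × B` (`S` a reflexive K3), for a spectral curve `C`
of degree `n` over `B`, `E = i_*L` with `ch(E) = (0,0,[C],χ(L))`,
`ch O_X(E_div) = (1, E_div, −2F_cl, 0)`, `Td(X/B) = (1,0,2F_cl,0)`, and the GRR
formula for the exact triangle
`Rπ₂*π₁*(E⊗O(E_div)) → Φ^N(E) → Φ^{I_Δ}(E)⊗O(E_div)`, the Chern character of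
`F = Φ^N(E)` is
`(2n, nE_div + (2χ + C·E_div)𝔣, −2nF_cl + χ E_div·𝔣 − [C], −3χ − C·E_div)`.
The push-pull operator `P = π₂*π₁*` kills degrees ≤ 2, integrates `H⁴` over `S`
via `σ` (with `σ[C] = n`, `σ F_cl = 1`) and sends `ϖ_X ↦ 𝔣`;
also `𝔣·F_cl = ϖ_X` and `E_div·𝔣` has no `H⁴(S)`-component (`σ(E_div·𝔣) = 0`). -/
theorem stmt_16 (A1 A2 : Type*) [AddCommGroup A1] [Module ℚ A1]
    [AddCommGroup A2] [Module ℚ A2]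
    (m11 : A1 →ₗ[ℚ] A1 →ₗ[ℚ] A2) (m12 : A1 →ₗ[ℚ] A2 →ₗ[ℚ] ℚ)
    (hm11symm : ∀ x y, m11 x y = m11 y x)
    (Ediv fB : A1) (Fcl C : A2) (n : ℤ) (χ : ℚ)
    (σ : A2 →ₗ[ℚ] ℚ)
    (hσC : σ C = n) (hσF : σ Fcl = 1) (hσEf : σ (m11 Ediv fB) = 0)
    (hfF : m12 fB Fcl = 1)
    (P : (ℚ × A1 × A2 × ℚ) → (ℚ × A1 × A2 × ℚ))
    (hP : ∀ t, P t = (σ t.2.2.1, t.2.2.2 • fB, 0, 0))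
    (chE chO Td chF : ℚ × A1 × A2 × ℚ)
    (hchE : chE = (0, 0, C, χ))
    (hchO : chO = (1, Ediv, (-2 : ℚ) • Fcl, 0))
    (hTd : Td = (1, 0, (2 : ℚ) • Fcl, 0))
    (hGRR : chF = P (chMul m11 m12 (chMul m11 m12 chE chO) Td)
      + chMul m11 m12 (P (chMul m11 m12 chE Td)) chO
      - chMul m11 m12 chE chO) :
    chF = ((2 * (n : ℚ)),
      (n : ℚ) • Ediv + (2 * χ + m12 Ediv C) • fB,
      (-(2 * (n : ℚ))) • Fcl + χ • (m11 Ediv fB) - C,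
      -3 * χ - m12 Ediv C) := by
  subst hchE hchO hTd hGRR
  simp only [chMul, hP, hfF, hσC, hσF, hσEf, hm11symm Ediv fB]
  simp only [map_zero, map_smul, zero_smul, smul_zero, one_smul, zero_mul, mul_zero, one_mul,
    mul_one, zero_add, add_zero, LinearMap.zero_apply, LinearMap.map_smul, map_neg,
    LinearMap.map_zero, smul_neg, neg_zero]
  ext <;> simp [Prod.add_def, hσC, hσF, hσEf, hfF, hm11symm Ediv fB] <;> ring_nf <;> try module
end
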